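/- The time-successor operator preserves the zone property: if Z ⊆ ℝᵐ is a zone (solution set of difference-bound constraints), then Z' = { v + τ·𝟙 : v ∈ Z, τ ≥ 0, and v_i + τ ≤ b_i for every i } is also definable by a conjunction of constraints of the form x_i ≺ k and x_i − x_j ≺ k (with k possibly rational derived from the b_i and the constraints of Z), and is convex. -/

import Mathlib

inductive ZRel | lt | le | eq | ge | gt
deriving DecidableEq

def ZRel.holds : ZRel → ℝ → ℝ → Prop
  | .lt, a, b => a < b
  | .le, a, b => a ≤ b
  | .eq, a, b => a = b
  | .ge, a, b => a ≥ b
  | .gt, a, b => a > b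

/-- Atomic constraints with integer constants. -/
inductive ZAtom (n : ℕ)
  | single (i : Fin n) (r : ZRel) (k : ℤ)
  | diff (i j : Fin n) (r : ZRel) (k : ℤ)
deriving DecidableEq

def ZAtom.sol {n : ℕ} : ZAtom n → Set (Fin n → ℝ)
  | .single i r k => {x | r.holds (x i) (k : ℝ)}
  | .diff i j r k => {x | r.holds (x i - x j) (k : ℝ)}

def IsZone {n : ℕ} (Z : Set (Fin n → ℝ)) : Prop :=
  ∃ A : Finset (ZAtom n), Z = ⋂ a ∈ A, a.sol

/-- Atomic constraints with rational constants. -/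
inductive QAtom (n : ℕ)
  | single (i : Fin n) (r : ZRel) (k : ℚ)
  | diff (i j : Fin n) (r : ZRel) (k : ℚ)
deriving DecidableEq

def QAtom.sol {n : ℕ} : QAtom n → Set (Fin n → ℝ)
  | .single i r k => {x | r.holds (x i) (k : ℝ)}
  | .diff i j r k => {x | r.holds (x i - x j) (k : ℝ)}

def IsQZone {n : ℕ} (Z : Set (Fin n → ℝ)) : Prop :=
  ∃ A : Finset (QAtom n), Z = ⋂ a ∈ A, a.sol

/-! ### auxiliary definitions -/

def ZRel.isLoB : ZRel → Bool
  | .lt => true | .le => true | .eq => true | _ => false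

def ZRel.isUpB : ZRel → Bool
  | .eq => true | .ge => true | .gt => true | _ => false

/-- value of a single atom on a valuation -/
def ZAtom.sVal {n : ℕ} (w : Fin n → ℝ) : ZAtom n → ℝ
  | .single i _ k => w i - (k : ℝ)
  | .diff _ _ _ _ => 0

def ZAtom.isLt {n : ℕ} : ZAtom n → Bool
  | .single _ .lt _ => true | _ => false

def ZAtom.isLw {n : ℕ} : ZAtom n → Bool
  | .single _ .le _ => true | .single _ .eq _ => true | _ => false

def ZAtom.isGt {n : ℕ} : ZAtom n → Bool
  | .single _ .gt _ => true | _ => false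

def ZAtom.isUw {n : ℕ} : ZAtom n → Bool
  | .single _ .eq _ => true | .single _ .ge _ => true | _ => false

noncomputable def lsSet {n : ℕ} (A : Finset (ZAtom n)) (w : Fin n → ℝ) : Finset ℝ :=
  (A.filter fun a => a.isLt).image (ZAtom.sVal w)
noncomputable def lwSet {n : ℕ} (A : Finset (ZAtom n)) (w : Fin n → ℝ) : Finset ℝ :=
  (A.filter fun a => a.isLw).image (ZAtom.sVal w)
noncomputable def usSet {n : ℕ} (A : Finset (ZAtom n)) (w : Fin n → ℝ) : Finset ℝ :=
  (A.filter fun a => a.isGt).image (ZAtom.sVal w)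
noncomputable def uwSet {n : ℕ} (A : Finset (ZAtom n)) (w : Fin n → ℝ) : Finset ℝ :=
  (A.filter fun a => a.isUw).image (ZAtom.sVal w)

lemma mem_lsSet {n : ℕ} {A : Finset (ZAtom n)} {w : Fin n → ℝ} {x : ℝ} :
    x ∈ lsSet A w ↔ ∃ i k, ZAtom.single i ZRel.lt k ∈ A ∧ x = w i - (k : ℝ) := by
  simp only [lsSet, Finset.mem_image, Finset.mem_filter]
  constructor
  · rintro ⟨a, ⟨ha, hb⟩, rfl⟩
    rcases a with ⟨i, r, k⟩ | ⟨i, j, r, k⟩ <;> cases r <;>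
      simp_all [ZAtom.isLt, ZAtom.sVal]
    exact ⟨i, k, ha, rfl⟩
  · rintro ⟨i, k, ha, rfl⟩
    exact ⟨ZAtom.single i .lt k, ⟨ha, rfl⟩, rfl⟩

lemma mem_lwSet {n : ℕ} {A : Finset (ZAtom n)} {w : Fin n → ℝ} {x : ℝ} :
    x ∈ lwSet A w ↔ ∃ i k, (ZAtom.single i ZRel.le k ∈ A ∨ ZAtom.single i ZRel.eq k ∈ A)
      ∧ x = w i - (k : ℝ) := by
  simp only [lwSet, Finset.mem_image, Finset.mem_filter]
  constructor
  · rintro ⟨a, ⟨ha, hb⟩, rfl⟩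
    rcases a with ⟨i, r, k⟩ | ⟨i, j, r, k⟩ <;> cases r <;>
      simp_all [ZAtom.isLw, ZAtom.sVal] <;>
      first
      | exact ⟨i, k, Or.inl ha, rfl⟩
      | exact ⟨i, k, Or.inr ha, rfl⟩
  · rintro ⟨i, k, ha | ha, rfl⟩
    · exact ⟨ZAtom.single i .le k, ⟨ha, rfl⟩, rfl⟩
    · exact ⟨ZAtom.single i .eq k, ⟨ha, rfl⟩, rfl⟩

lemma mem_usSet {n : ℕ} {A : Finset (ZAtom n)} {w : Fin n → ℝ} {x : ℝ} :
    x ∈ usSet A w ↔ ∃ i k, ZAtom.single i ZRel.gt k ∈ A ∧ x = w i - (k : ℝ) := by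
  simp only [usSet, Finset.mem_image, Finset.mem_filter]
  constructor
  · rintro ⟨a, ⟨ha, hb⟩, rfl⟩
    rcases a with ⟨i, r, k⟩ | ⟨i, j, r, k⟩ <;> cases r <;>
      simp_all [ZAtom.isGt, ZAtom.sVal]
    exact ⟨i, k, ha, rfl⟩
  · rintro ⟨i, k, ha, rfl⟩
    exact ⟨ZAtom.single i .gt k, ⟨ha, rfl⟩, rfl⟩

lemma mem_uwSet {n : ℕ} {A : Finset (ZAtom n)} {w : Fin n → ℝ} {x : ℝ} :
    x ∈ uwSet A w ↔ ∃ i k, (ZAtom.single i ZRel.eq k ∈ A ∨ ZAtom.single i ZRel.ge k ∈ A)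
      ∧ x = w i - (k : ℝ) := by
  simp only [uwSet, Finset.mem_image, Finset.mem_filter]
  constructor
  · rintro ⟨a, ⟨ha, hb⟩, rfl⟩
    rcases a with ⟨i, r, k⟩ | ⟨i, j, r, k⟩ <;> cases r <;>
      simp_all [ZAtom.isUw, ZAtom.sVal] <;>
      first
      | exact ⟨i, k, Or.inl ha, rfl⟩
      | exact ⟨i, k, Or.inr ha, rfl⟩
  · rintro ⟨i, k, ha | ha, rfl⟩
    · exact ⟨ZAtom.single i .eq k, ⟨ha, rfl⟩, rfl⟩
    · exact ⟨ZAtom.single i .ge k, ⟨ha, rfl⟩, rfl⟩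

/-- the difference-constraint part of an atom, evaluated on `w` -/
def Dcond {n : ℕ} (w : Fin n → ℝ) : ZAtom n → Prop
  | .diff i j r k => r.holds (w i - w j) (k : ℝ)
  | .single _ _ _ => True

/-- key equivalence: shifted membership decomposes into τ-free diff
constraints plus bounds on τ -/
lemma key_equiv {n : ℕ} (A : Finset (ZAtom n)) (w : Fin n → ℝ) (τ : ℝ) :
    (∀ a ∈ A, (fun i => w i - τ) ∈ a.sol) ↔
      ((∀ a ∈ A, Dcond w a) ∧ (∀ x ∈ lsSet A w, x < τ) ∧ (∀ x ∈ lwSet A w, x ≤ τ) ∧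
        (∀ x ∈ usSet A w, τ < x) ∧ (∀ x ∈ uwSet A w, τ ≤ x)) := by
  constructor
  · intro h
    refine ⟨?_, ?_, ?_, ?_, ?_⟩
    · intro a ha
      rcases a with ⟨i, r, k⟩ | ⟨i, j, r, k⟩
      · trivial
      · have := h _ ha
        simp only [ZAtom.sol, Set.mem_setOf_eq] at this
        have e : (w i - τ) - (w j - τ) = w i - w j := by ring
        rw [e] at this
        exact this
    · intro x hx
      obtain ⟨i, k, ha, rfl⟩ := mem_lsSet.1 hx
      have := h _ ha
      simp only [ZAtom.sol, ZRel.holds, Set.mem_setOf_eq] at this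
      linarith
    · intro x hx
      obtain ⟨i, k, ha | ha, rfl⟩ := mem_lwSet.1 hx <;>
      · have := h _ ha
        simp only [ZAtom.sol, ZRel.holds, Set.mem_setOf_eq] at this
        linarith
    · intro x hx
      obtain ⟨i, k, ha, rfl⟩ := mem_usSet.1 hx
      have := h _ ha
      simp only [ZAtom.sol, ZRel.holds, Set.mem_setOf_eq] at this
      linarith [this]
    · intro x hx
      obtain ⟨i, k, ha | ha, rfl⟩ := mem_uwSet.1 hx <;>
      · have := h _ ha
        simp only [ZAtom.sol, ZRel.holds, Set.mem_setOf_eq] at this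
        linarith [this]
  · rintro ⟨hd, hls, hlw, hus, huw⟩ a ha
    rcases a with ⟨i, r, k⟩ | ⟨i, j, r, k⟩
    · cases r
      · have := hls _ (mem_lsSet.2 ⟨i, k, ha, rfl⟩)
        simp only [ZAtom.sol, ZRel.holds, Set.mem_setOf_eq]; linarith
      · have := hlw _ (mem_lwSet.2 ⟨i, k, Or.inl ha, rfl⟩)
        simp only [ZAtom.sol, ZRel.holds, Set.mem_setOf_eq]; linarith
      · have h1 := hlw _ (mem_lwSet.2 ⟨i, k, Or.inr ha, rfl⟩)
        have h2 := huw _ (mem_uwSet.2 ⟨i, k, Or.inl ha, rfl⟩)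
        simp only [ZAtom.sol, ZRel.holds, Set.mem_setOf_eq]; linarith
      · have := huw _ (mem_uwSet.2 ⟨i, k, Or.inr ha, rfl⟩)
        simp only [ZAtom.sol, ZRel.holds, Set.mem_setOf_eq]
        show (k : ℝ) ≤ w i - τ; linarith
      · have := hus _ (mem_usSet.2 ⟨i, k, ha, rfl⟩)
        simp only [ZAtom.sol, ZRel.holds, Set.mem_setOf_eq]
        show (k : ℝ) < w i - τ; linarith
    · have := hd _ ha
      simp only [Dcond] at this
      simp only [ZAtom.sol, Set.mem_setOf_eq]
      have e : (w i - τ) - (w j - τ) = w i - w j := by ring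
      rw [e]
      exact this

/-- every QAtom solution set is convex -/
lemma qatom_sol_convex {n : ℕ} (a : QAtom n) : Convex ℝ a.sol := by
  have hi : ∀ i : Fin n, IsLinearMap ℝ (fun x : Fin n → ℝ => x i) :=
    fun i => ⟨fun _ _ => rfl, fun _ _ => rfl⟩
  have hij : ∀ i j : Fin n, IsLinearMap ℝ (fun x : Fin n → ℝ => x i - x j) :=
    fun i j => ⟨fun a b => by simp [add_sub_add_comm], fun c a => by
      simp [smul_sub]; ring⟩
  cases a with
  | single i r k =>
    cases r with
    | lt => exact convex_halfSpace_lt (hi i) _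
    | le => exact convex_halfSpace_le (hi i) _
    | eq => exact convex_hyperplane (hi i) _
    | ge => exact convex_halfSpace_ge (hi i) _
    | gt => exact convex_halfSpace_gt (hi i) _
  | diff i j r k =>
    cases r with
    | lt => exact convex_halfSpace_lt (hij i j) _
    | le => exact convex_halfSpace_le (hij i j) _
    | eq => exact convex_hyperplane (hij i j) _
    | ge => exact convex_halfSpace_ge (hij i j) _
    | gt => exact convex_halfSpace_gt (hij i j) _



open Finset in
lemma FM (Ls Lw Us Uw : Finset ℝ) :
    (∃ τ : ℝ, 0 ≤ τ ∧ (∀ x ∈ Ls, x < τ) ∧ (∀ x ∈ Lw, x ≤ τ) ∧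
      (∀ x ∈ Us, τ < x) ∧ (∀ x ∈ Uw, τ ≤ x)) ↔
    ((∀ x ∈ Us, 0 < x) ∧ (∀ x ∈ Uw, 0 ≤ x) ∧
     (∀ x ∈ Ls, ∀ y ∈ Us, x < y) ∧ (∀ x ∈ Ls, ∀ y ∈ Uw, x < y) ∧
     (∀ x ∈ Lw, ∀ y ∈ Us, x < y) ∧ (∀ x ∈ Lw, ∀ y ∈ Uw, x ≤ y)) := by
  constructor
  · rintro ⟨τ, h0, hls, hlw, hus, huw⟩
    exact ⟨fun x hx => lt_of_le_of_lt h0 (hus x hx),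
      fun x hx => le_trans h0 (huw x hx),
      fun x hx y hy => lt_trans (hls x hx) (hus y hy),
      fun x hx y hy => lt_of_lt_of_le (hls x hx) (huw y hy),
      fun x hx y hy => lt_of_le_of_lt (hlw x hx) (hus y hy),
      fun x hx y hy => le_trans (hlw x hx) (huw y hy)⟩
  · rintro ⟨h1, h2, h3, h4, h5, h6⟩
    have hLne : (insert (0:ℝ) (Ls ∪ Lw)).Nonempty := insert_nonempty _ _
    set L : ℝ := (insert (0:ℝ) (Ls ∪ Lw)).max' hLne with hLdef
    have hL0 : 0 ≤ L := le_max' _ _ (mem_insert_self _ _)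
    have hLls : ∀ x ∈ Ls, x ≤ L := fun x hx =>
      le_max' _ _ (mem_insert_of_mem (mem_union_left _ hx))
    have hLlw : ∀ x ∈ Lw, x ≤ L := fun x hx =>
      le_max' _ _ (mem_insert_of_mem (mem_union_right _ hx))
    have hLmem := max'_mem _ hLne
    rw [← hLdef] at hLmem
    -- L satisfies the "lower to upper" comparisons
    have hLUs : ∀ y ∈ Us, L < y := by
      intro y hy
      rcases mem_insert.1 hLmem with h | h
      · rw [h]; exact h1 y hy
      · rcases mem_union.1 h with h | h
        · exact h3 _ h _ hy
        · exact h5 _ h _ hy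
    have hLUw : ∀ y ∈ Uw, L ≤ y := by
      intro y hy
      rcases mem_insert.1 hLmem with h | h
      · rw [h]; exact h2 y hy
      · rcases mem_union.1 h with h | h
        · exact (h4 _ h _ hy).le
        · exact h6 _ h _ hy
    rcases (Us ∪ Uw).eq_empty_or_nonempty with hUe | hUne
    · refine ⟨L + 1, by linarith, ?_, ?_, ?_, ?_⟩
      · intro x hx; have := hLls x hx; linarith
      · intro x hx; have := hLlw x hx; linarith
      · intro x hx
        have : x ∈ Us ∪ Uw := mem_union_left _ hx
        rw [hUe] at this; exact absurd this (notMem_empty _)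
      · intro x hx
        have : x ∈ Us ∪ Uw := mem_union_right _ hx
        rw [hUe] at this; exact absurd this (notMem_empty _)
    set U : ℝ := (Us ∪ Uw).min' hUne with hUdef
    have hUus : ∀ y ∈ Us, U ≤ y := fun y hy => min'_le _ _ (mem_union_left _ hy)
    have hUuw : ∀ y ∈ Uw, U ≤ y := fun y hy => min'_le _ _ (mem_union_right _ hy)
    have hUmem := min'_mem (Us ∪ Uw) hUne
    rw [← hUdef] at hUmem
    have hLU : L ≤ U := by
      rcases mem_union.1 hUmem with h | h
      · exact (hLUs _ h).le
      · exact hLUw _ h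
    rcases lt_or_eq_of_le hLU with hlt | heq
    · refine ⟨(L + U) / 2, by linarith, ?_, ?_, ?_, ?_⟩
      · intro x hx; have := hLls x hx; linarith
      · intro x hx; have := hLlw x hx; linarith
      · intro y hy; have := hUus y hy; linarith
      · intro y hy; have := hUuw y hy; linarith
    · refine ⟨L, hL0, ?_, hLlw, hLUs, hLUw⟩
      intro x hx
      rcases mem_union.1 hUmem with h | h
      · have := h3 _ hx _ h; linarith [hUus _ h]
      · have := h4 _ hx _ h; linarith

/-! ### the derived constraint set -/

def dqF {n : ℕ} : ZAtom n → Finset (QAtom n)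
  | .diff i j r k => {QAtom.diff i j r (k : ℚ)}
  | _ => ∅

def c0F {n : ℕ} : ZAtom n → Finset (QAtom n)
  | .single j r k =>
      if r.isUpB then {QAtom.single j (if r = .gt then .gt else .ge) (k : ℚ)} else ∅
  | _ => ∅

def ccF {n : ℕ} : ZAtom n → ZAtom n → Finset (QAtom n)
  | .single i r k, .single j r' k' =>
      if r.isLoB && r'.isUpB then
        {QAtom.diff i j (if r = .lt ∨ r' = .gt then .lt else .le) ((k : ℚ) - k')}
      else ∅
  | _, _ => ∅

def BSet {n : ℕ} (A : Finset (ZAtom n)) (b : Fin n → ℤ) : Finset (QAtom n) :=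
  ((Finset.univ.image fun i => QAtom.single i .le ((b i : ℤ) : ℚ)) ∪
      A.biUnion dqF ∪ A.biUnion c0F) ∪
    (A ×ˢ A).biUnion fun p => ccF p.1 p.2

lemma mem_BSet_sol {n : ℕ} (A : Finset (ZAtom n)) (b : Fin n → ℤ) (w : Fin n → ℝ) :
    (∀ q ∈ BSet A b, w ∈ q.sol) ↔
      ((∀ i, w i ≤ (b i : ℝ)) ∧ (∀ a ∈ A, Dcond w a) ∧
       (∀ x ∈ usSet A w, 0 < x) ∧ (∀ x ∈ uwSet A w, 0 ≤ x) ∧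
       (∀ x ∈ lsSet A w, ∀ y ∈ usSet A w, x < y) ∧
       (∀ x ∈ lsSet A w, ∀ y ∈ uwSet A w, x < y) ∧
       (∀ x ∈ lwSet A w, ∀ y ∈ usSet A w, x < y) ∧
       (∀ x ∈ lwSet A w, ∀ y ∈ uwSet A w, x ≤ y)) := by
  constructor
  · intro h
    have hpair : ∀ {i j : Fin n} {r r' : ZRel} {k k' : ℤ}, ZAtom.single i r k ∈ A →
        ZAtom.single j r' k' ∈ A → r.isLoB = true → r'.isUpB = true →
        (if r = ZRel.lt ∨ r' = ZRel.gt then ZRel.lt else ZRel.le).holds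
          (w i - w j) ((k : ℝ) - (k' : ℝ)) := by
      intro i j r r' k k' ha ha' hr hr'
      have hmem : QAtom.diff i j (if r = ZRel.lt ∨ r' = ZRel.gt then ZRel.lt else ZRel.le)
          ((k : ℚ) - (k' : ℚ)) ∈ BSet A b := by
        refine Finset.mem_union_right _ (Finset.mem_biUnion.2
          ⟨(ZAtom.single i r k, ZAtom.single j r' k'),
            Finset.mem_product.2 ⟨ha, ha'⟩, ?_⟩)
        simp [ccF, hr, hr']
      have hh := h _ hmem
      simp only [QAtom.sol, Set.mem_setOf_eq] at hh
      have e : (((k : ℚ) - (k' : ℚ) : ℚ) : ℝ) = (k : ℝ) - (k' : ℝ) := by push_cast; ring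
      rwa [e] at hh
    have hup : ∀ {j : Fin n} {r' : ZRel} {k' : ℤ}, ZAtom.single j r' k' ∈ A →
        r'.isUpB = true →
        (if r' = ZRel.gt then ZRel.gt else ZRel.ge).holds (w j) (k' : ℝ) := by
      intro j r' k' ha hr'
      have hmem : QAtom.single j (if r' = ZRel.gt then ZRel.gt else ZRel.ge)
          ((k' : ℤ) : ℚ) ∈ BSet A b := by
        refine Finset.mem_union_left _ (Finset.mem_union_right _
          (Finset.mem_biUnion.2 ⟨_, ha, ?_⟩))
        simp [c0F, hr']
      have hh := h _ hmem
      simp only [QAtom.sol, Set.mem_setOf_eq] at hh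
      rwa [Rat.cast_intCast] at hh
    refine ⟨?_, ?_, ?_, ?_, ?_, ?_, ?_, ?_⟩
    · intro i
      have hmem : QAtom.single i .le ((b i : ℤ) : ℚ) ∈ BSet A b :=
        Finset.mem_union_left _ (Finset.mem_union_left _ (Finset.mem_union_left _
          (Finset.mem_image.2 ⟨i, Finset.mem_univ _, rfl⟩)))
      have hh := h _ hmem
      simp only [QAtom.sol, Set.mem_setOf_eq, ZRel.holds] at hh
      rwa [Rat.cast_intCast] at hh
    · intro a ha
      rcases a with ⟨i, r, k⟩ | ⟨i, j, r, k⟩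
      · trivial
      · have hmem : QAtom.diff i j r ((k : ℤ) : ℚ) ∈ BSet A b :=
          Finset.mem_union_left _ (Finset.mem_union_left _ (Finset.mem_union_right _
            (Finset.mem_biUnion.2 ⟨_, ha, by simp [dqF]⟩)))
        have hh := h _ hmem
        simp only [QAtom.sol, Set.mem_setOf_eq] at hh
        simp only [Dcond]
        rwa [Rat.cast_intCast] at hh
    · intro x hx
      obtain ⟨j, k, ha, rfl⟩ := mem_usSet.1 hx
      have hh := hup ha rfl
      rw [if_pos rfl] at hh
      simp only [ZRel.holds] at hh
      linarith [hh]
    · intro x hx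
      rcases mem_uwSet.1 hx with ⟨j, k, ha | ha, rfl⟩ <;>
      · have hh := hup ha rfl
        rw [if_neg (by decide)] at hh
        simp only [ZRel.holds] at hh
        linarith [hh]
    · intro x hx y hy
      obtain ⟨i, k, ha, rfl⟩ := mem_lsSet.1 hx
      obtain ⟨j, k', ha', rfl⟩ := mem_usSet.1 hy
      have hh := hpair ha ha' rfl rfl
      rw [if_pos (Or.inl rfl)] at hh
      simp only [ZRel.holds] at hh
      linarith
    · intro x hx y hy
      obtain ⟨i, k, ha, rfl⟩ := mem_lsSet.1 hx
      rcases mem_uwSet.1 hy with ⟨j, k', ha' | ha', rfl⟩ <;>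
      · have hh := hpair ha ha' rfl rfl
        rw [if_pos (Or.inl rfl)] at hh
        simp only [ZRel.holds] at hh
        linarith
    · intro x hx y hy
      obtain ⟨j, k', ha', rfl⟩ := mem_usSet.1 hy
      rcases mem_lwSet.1 hx with ⟨i, k, ha | ha, rfl⟩ <;>
      · have hh := hpair ha ha' rfl rfl
        rw [if_pos (Or.inr rfl)] at hh
        simp only [ZRel.holds] at hh
        linarith
    · intro x hx y hy
      rcases mem_lwSet.1 hx with ⟨i, k, ha | ha, rfl⟩ <;>
        rcases mem_uwSet.1 hy with ⟨j, k', ha' | ha', rfl⟩ <;>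
      · have hh := hpair ha ha' rfl rfl
        rw [if_neg (by decide)] at hh
        simp only [ZRel.holds] at hh
        linarith
  · rintro ⟨hb0, hd, p1, p2, p3, p4, p5, p6⟩ q hq
    rcases Finset.mem_union.1 hq with hq | hq
    · rcases Finset.mem_union.1 hq with hq | hq
      · rcases Finset.mem_union.1 hq with hq | hq
        · obtain ⟨i, -, rfl⟩ := Finset.mem_image.1 hq
          simp only [QAtom.sol, Set.mem_setOf_eq, ZRel.holds]
          rw [Rat.cast_intCast]
          exact hb0 i
        · obtain ⟨a, ha, hq⟩ := Finset.mem_biUnion.1 hq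
          rcases a with ⟨i, r, k⟩ | ⟨i, j, r, k⟩
          · simp [dqF] at hq
          · simp only [dqF, Finset.mem_singleton] at hq
            subst hq
            have hh := hd _ ha
            simp only [Dcond] at hh
            simp only [QAtom.sol, Set.mem_setOf_eq]
            rwa [Rat.cast_intCast]
      · obtain ⟨a, ha, hq⟩ := Finset.mem_biUnion.1 hq
        rcases a with ⟨i, r, k⟩ | ⟨i, j, r, k⟩
        swap
        · simp [c0F] at hq
        cases r <;> simp [c0F, ZRel.isUpB] at hq <;> subst hq <;>
          simp only [QAtom.sol, Set.mem_setOf_eq, ZRel.holds] <;>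
          rw [Rat.cast_intCast]
        · have := p2 _ (mem_uwSet.2 ⟨i, k, Or.inl ha, rfl⟩); linarith
        · have := p2 _ (mem_uwSet.2 ⟨i, k, Or.inr ha, rfl⟩); linarith
        · have := p1 _ (mem_usSet.2 ⟨i, k, ha, rfl⟩); linarith
    · obtain ⟨p, hp, hq⟩ := Finset.mem_biUnion.1 hq
      obtain ⟨a, a'⟩ := p
      rw [Finset.mem_product] at hp
      obtain ⟨ha, ha'⟩ := hp
      rcases a with ⟨i, r, k⟩ | ⟨i, j0, r, k⟩
      swap
      · simp [ccF] at hq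
      rcases a' with ⟨j, r', k'⟩ | ⟨j1, j2, r', k'⟩
      swap
      · simp [ccF] at hq
      cases r <;> cases r' <;> simp [ccF, ZRel.isLoB, ZRel.isUpB] at hq <;> subst hq <;>
        simp only [QAtom.sol, Set.mem_setOf_eq, ZRel.holds] <;>
        (rw [show (((k : ℚ) - (k' : ℚ) : ℚ) : ℝ) = (k : ℝ) - (k' : ℝ) from by push_cast; ring]) <;>
        first
        | (have h1 := p3 _ (mem_lsSet.2 ⟨i, k, ha, rfl⟩) _ (mem_usSet.2 ⟨j, k', ha', rfl⟩); linarith)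
        | (have h1 := p4 _ (mem_lsSet.2 ⟨i, k, ha, rfl⟩) _ (mem_uwSet.2 ⟨j, k', Or.inl ha', rfl⟩); linarith)
        | (have h1 := p4 _ (mem_lsSet.2 ⟨i, k, ha, rfl⟩) _ (mem_uwSet.2 ⟨j, k', Or.inr ha', rfl⟩); linarith)
        | (have h1 := p5 _ (mem_lwSet.2 ⟨i, k, Or.inl ha, rfl⟩) _ (mem_usSet.2 ⟨j, k', ha', rfl⟩); linarith)
        | (have h1 := p5 _ (mem_lwSet.2 ⟨i, k, Or.inr ha, rfl⟩) _ (mem_usSet.2 ⟨j, k', ha', rfl⟩); linarith)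
        | (have h1 := p6 _ (mem_lwSet.2 ⟨i, k, Or.inl ha, rfl⟩) _ (mem_uwSet.2 ⟨j, k', Or.inl ha', rfl⟩); linarith)
        | (have h1 := p6 _ (mem_lwSet.2 ⟨i, k, Or.inl ha, rfl⟩) _ (mem_uwSet.2 ⟨j, k', Or.inr ha', rfl⟩); linarith)
        | (have h1 := p6 _ (mem_lwSet.2 ⟨i, k, Or.inr ha, rfl⟩) _ (mem_uwSet.2 ⟨j, k', Or.inl ha', rfl⟩); linarith)
        | (have h1 := p6 _ (mem_lwSet.2 ⟨i, k, Or.inr ha, rfl⟩) _ (mem_uwSet.2 ⟨j, k', Or.inr ha', rfl⟩); linarith)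


/-- The time-successor operator preserves the zone property: the bounded
time-successor set of a zone is definable in the constraint language (with
rational constants) and is convex. -/
theorem time_successor_is_zone {m : ℕ} (Z : Set (Fin m → ℝ)) (hZ : IsZone Z)
    (b : Fin m → ℤ) :
    IsQZone {w : Fin m → ℝ | ∃ v ∈ Z, ∃ τ : ℝ, 0 ≤ τ ∧
        (∀ i, v i + τ ≤ (b i : ℝ)) ∧ w = fun i => v i + τ} ∧
      Convex ℝ {w : Fin m → ℝ | ∃ v ∈ Z, ∃ τ : ℝ, 0 ≤ τ ∧
        (∀ i, v i + τ ≤ (b i : ℝ)) ∧ w = fun i => v i + τ} := by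
  obtain ⟨A, hA⟩ := hZ
  have hW : ∀ w : Fin m → ℝ,
      (w ∈ {w : Fin m → ℝ | ∃ v ∈ Z, ∃ τ : ℝ, 0 ≤ τ ∧
        (∀ i, v i + τ ≤ (b i : ℝ)) ∧ w = fun i => v i + τ}) ↔
      ((∀ i, w i ≤ (b i : ℝ)) ∧
        ∃ τ : ℝ, 0 ≤ τ ∧ ∀ a ∈ A, (fun i => w i - τ) ∈ a.sol) := by
    intro w
    simp only [Set.mem_setOf_eq]
    constructor
    · rintro ⟨v, hv, τ, hτ, hbb, rfl⟩
      refine ⟨fun i => hbb i, τ, hτ, ?_⟩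
      have e : (fun i => (fun i => v i + τ) i - τ) = v := by funext i; ring
      rw [e]
      rw [hA] at hv
      exact fun a ha => Set.mem_iInter₂.1 hv a ha
    · rintro ⟨hbb, τ, hτ, hmem⟩
      refine ⟨fun i => w i - τ, ?_, τ, hτ, fun i => by show w i - τ + τ ≤ (b i : ℝ); linarith [hbb i], ?_⟩
      · rw [hA]; exact Set.mem_iInter₂.2 hmem
      · funext i; ring
  have hEq : {w : Fin m → ℝ | ∃ v ∈ Z, ∃ τ : ℝ, 0 ≤ τ ∧
      (∀ i, v i + τ ≤ (b i : ℝ)) ∧ w = fun i => v i + τ} = ⋂ a ∈ BSet A b, a.sol := by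
    ext w
    rw [hW w, Set.mem_iInter₂, mem_BSet_sol A b w]
    constructor
    · rintro ⟨hb0, τ, hτ, hmem⟩
      obtain ⟨hd, h1, h2, h3, h4⟩ := (key_equiv A w τ).1 hmem
      obtain ⟨q1, q2, q3, q4, q5, q6⟩ :=
        (FM (lsSet A w) (lwSet A w) (usSet A w) (uwSet A w)).1 ⟨τ, hτ, h1, h2, h3, h4⟩
      exact ⟨hb0, hd, q1, q2, q3, q4, q5, q6⟩
    · rintro ⟨hb0, hd, q1, q2, q3, q4, q5, q6⟩
      obtain ⟨τ, hτ, h1, h2, h3, h4⟩ :=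
        (FM (lsSet A w) (lwSet A w) (usSet A w) (uwSet A w)).2 ⟨q1, q2, q3, q4, q5, q6⟩
      exact ⟨hb0, τ, hτ, (key_equiv A w τ).2 ⟨hd, h1, h2, h3, h4⟩⟩
  refine ⟨⟨BSet A b, hEq⟩, ?_⟩
  rw [hEq]
  exact convex_iInter fun a => convex_iInter fun _ => qatom_sol_convex a
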